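/- Let F be a free group with basis x₁,…,x_r and N a normal subgroup of F. The map φ sending x_i to the matrix with entries (μ(x_i), u_i; 0, 1) extends to a group homomorphism from F/N′ to M(F/N) which is injective (the Magnus embedding). -/

import Mathlib

/-- The Magnus matrix group `M(Q)` (for `Q = F/N`): matrices `((g, u), (0, 1))` with
`g ∈ Q` and `u` in the free `ℤ(Q)`-module of rank `r`, under matrix multiplication
`(g,u)·(g',u') = (g g', g·u' + u)`. -/
@[ext] structure Magnus (r : ℕ) (Q : Type) [Group Q] where
  g : Q
  u : Fin r → MonoidAlgebra ℤ Q

namespace Magnus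

variable {r : ℕ} {Q : Type} [Group Q]

noncomputable instance : Mul (Magnus r Q) :=
  ⟨fun x y => ⟨x.g * y.g, fun i => MonoidAlgebra.single x.g (1 : ℤ) * y.u i + x.u i⟩⟩

noncomputable instance : One (Magnus r Q) := ⟨⟨1, 0⟩⟩

noncomputable instance : Inv (Magnus r Q) :=
  ⟨fun x => ⟨x.g⁻¹, fun i => -(MonoidAlgebra.single x.g⁻¹ (1 : ℤ) * x.u i)⟩⟩

@[simp] lemma mul_g (x y : Magnus r Q) : (x * y).g = x.g * y.g := rfl
@[simp] lemma mul_u (x y : Magnus r Q) (i : Fin r) :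
    (x * y).u i = MonoidAlgebra.single x.g (1 : ℤ) * y.u i + x.u i := rfl
@[simp] lemma one_g : (1 : Magnus r Q).g = 1 := rfl
@[simp] lemma one_u (i : Fin r) : (1 : Magnus r Q).u i = 0 := rfl
@[simp] lemma inv_g (x : Magnus r Q) : (x⁻¹).g = x.g⁻¹ := rfl
@[simp] lemma inv_u (x : Magnus r Q) (i : Fin r) :
    (x⁻¹).u i = -(MonoidAlgebra.single x.g⁻¹ (1 : ℤ) * x.u i) := rfl

noncomputable instance : Group (Magnus r Q) where
  mul_assoc x y z := by
    refine Magnus.ext ?_ ?_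
    · simp [mul_assoc]
    · funext i
      simp [mul_add, add_assoc, ← mul_assoc, MonoidAlgebra.single_mul_single]
  one_mul x := by
    refine Magnus.ext ?_ ?_
    · simp
    · funext i; simp [MonoidAlgebra.one_def.symm]
  mul_one x := by
    refine Magnus.ext ?_ ?_
    · simp
    · funext i; simp
  inv_mul_cancel x := by
    refine Magnus.ext ?_ ?_
    · simp
    · funext i; simp [← mul_assoc, MonoidAlgebra.single_mul_single]

end Magnus

section MagnusProof

variable {r : ℕ} (N : Subgroup (FreeGroup (Fin r))) [N.Normal]

/-- The projection `Magnus r Q →* Q`. -/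
def Magnus.gHom {Q : Type} [Group Q] : Magnus r Q →* Q where
  toFun := Magnus.g
  map_one' := rfl
  map_mul' _ _ := rfl

/-- The lift of `x_i ↦ ((μ x_i, u_i),(0,1))` to the free group. -/
noncomputable def magnusPsi : FreeGroup (Fin r) →* Magnus r (FreeGroup (Fin r) ⧸ N) :=
  FreeGroup.lift fun i => ⟨QuotientGroup.mk (FreeGroup.of i), Pi.single i 1⟩

lemma magnusPsi_of (i : Fin r) :
    magnusPsi N (FreeGroup.of i) = ⟨QuotientGroup.mk (FreeGroup.of i), Pi.single i 1⟩ :=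
  FreeGroup.lift_apply_of

lemma magnusPsi_g (w : FreeGroup (Fin r)) :
    (magnusPsi N w).g = QuotientGroup.mk w := by
  have h : (Magnus.gHom).comp (magnusPsi N) = QuotientGroup.mk' N := by
    apply FreeGroup.ext_hom
    intro i
    simp [magnusPsi, Magnus.gHom]
  exact DFunLike.congr_fun h w

lemma magnus_commute_of_g_one {Q : Type} [Group Q] (a b : Magnus r Q)
    (ha : a.g = 1) (hb : b.g = 1) : a * b = b * a := by
  refine Magnus.ext ?_ ?_
  · simp [ha, hb]
  · funext i
    simp [ha, hb, MonoidAlgebra.one_def.symm, add_comm]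

lemma magnus_comm_le_ker : ⁅N, N⁆ ≤ (magnusPsi N).ker := by
  rw [Subgroup.commutator_le]
  intro a ha b hb
  rw [MonoidHom.mem_ker, map_commutatorElement]
  rw [commutatorElement_eq_one_iff_commute]
  exact magnus_commute_of_g_one _ _
    (by rw [magnusPsi_g]; exact (QuotientGroup.eq_one_iff a).2 ha)
    (by rw [magnusPsi_g]; exact (QuotientGroup.eq_one_iff b).2 hb)

lemma magnus_mem_aux (q : FreeGroup (Fin r) ⧸ N) (w : FreeGroup (Fin r)) :
    q.out * w * (QuotientGroup.mk (q.out * w) : FreeGroup (Fin r) ⧸ N).out⁻¹ ∈ N := by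
  rw [← QuotientGroup.eq_one_iff]
  simp [QuotientGroup.mk_mul, QuotientGroup.out_eq']

/-- The derivation `F → Fun(Q, Nᵃᵇ)` attached to the section `q ↦ q.out`. -/
noncomputable def magnusD (w : FreeGroup (Fin r)) (q : FreeGroup (Fin r) ⧸ N) :
    Additive (Abelianization ↥N) :=
  Additive.ofMul (Abelianization.of
    (⟨q.out * w * (QuotientGroup.mk (q.out * w) : FreeGroup (Fin r) ⧸ N).out⁻¹,
      magnus_mem_aux N q w⟩ : ↥N))

lemma magnusD_mul (x y : FreeGroup (Fin r)) (q : FreeGroup (Fin r) ⧸ N) :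
    magnusD N (x * y) q = magnusD N x q + magnusD N y (QuotientGroup.mk (q.out * x)) := by
  unfold magnusD
  rw [← ofMul_mul, ← map_mul]
  refine congrArg Abelianization.of (Subtype.ext ?_)
  simp only [Subgroup.coe_mul]
  have h1 : (QuotientGroup.mk ((QuotientGroup.mk (q.out * x) : FreeGroup (Fin r) ⧸ N).out * y)
      : FreeGroup (Fin r) ⧸ N) = QuotientGroup.mk (q.out * (x * y)) := by
    simp [QuotientGroup.mk_mul, QuotientGroup.out_eq', mul_assoc]
  rw [h1]
  group

lemma magnusD_one (q : FreeGroup (Fin r) ⧸ N) : magnusD N 1 q = 0 := by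
  unfold magnusD
  have h : (⟨q.out * 1 * (QuotientGroup.mk (q.out * 1) : FreeGroup (Fin r) ⧸ N).out⁻¹,
      magnus_mem_aux N q 1⟩ : ↥N) = 1 := by
    refine Subtype.ext ?_
    show q.out * 1 * _⁻¹ = 1
    simp [QuotientGroup.out_eq']
  rw [h, map_one]
  rfl

lemma magnusD_inv (x : FreeGroup (Fin r)) (q : FreeGroup (Fin r) ⧸ N) :
    magnusD N x⁻¹ q = - magnusD N x (QuotientGroup.mk (q.out * x⁻¹)) := by
  have h := magnusD_mul N x⁻¹ x q
  rw [inv_mul_cancel, magnusD_one] at h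
  exact eq_neg_of_add_eq_zero_left h.symm

lemma magnus_mk_out_mul (q : FreeGroup (Fin r) ⧸ N) (x : FreeGroup (Fin r)) :
    (QuotientGroup.mk (q.out * x) : FreeGroup (Fin r) ⧸ N) = q * QuotientGroup.mk x := by
  simp [QuotientGroup.mk_mul, QuotientGroup.out_eq']

/-- Pointwise `ℤ(F/N)`-action pairing of a module element with the basic derivation `d x_j`. -/
noncomputable def magnusT (j : Fin r) (v : MonoidAlgebra ℤ (FreeGroup (Fin r) ⧸ N))
    (q : FreeGroup (Fin r) ⧸ N) : Additive (Abelianization ↥N) :=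
  v.coeff.sum fun g c => c • magnusD N (FreeGroup.of j) (q * g)

lemma magnusT_zero (j : Fin r) (q : FreeGroup (Fin r) ⧸ N) : magnusT N j 0 q = 0 :=
  Finsupp.sum_zero_index

lemma magnusT_add (j : Fin r) (u v : MonoidAlgebra ℤ (FreeGroup (Fin r) ⧸ N))
    (q : FreeGroup (Fin r) ⧸ N) :
    magnusT N j (u + v) q = magnusT N j u q + magnusT N j v q :=
  Finsupp.sum_add_index' (fun a => zero_smul ℤ _) (fun a b c => add_smul b c _)

lemma magnusT_single (j : Fin r) (g : FreeGroup (Fin r) ⧸ N) (c : ℤ)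
    (q : FreeGroup (Fin r) ⧸ N) :
    magnusT N j (MonoidAlgebra.single g c) q = c • magnusD N (FreeGroup.of j) (q * g) :=
  Finsupp.sum_single_index (zero_smul ℤ _)

lemma magnusT_neg (j : Fin r) (v : MonoidAlgebra ℤ (FreeGroup (Fin r) ⧸ N))
    (q : FreeGroup (Fin r) ⧸ N) : magnusT N j (-v) q = - magnusT N j v q := by
  have h := magnusT_add N j (-v) v q
  rw [neg_add_cancel, magnusT_zero] at h
  exact eq_neg_of_add_eq_zero_left h.symm

lemma magnusT_shift (j : Fin r) (g : FreeGroup (Fin r) ⧸ N)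
    (v : MonoidAlgebra ℤ (FreeGroup (Fin r) ⧸ N)) (q : FreeGroup (Fin r) ⧸ N) :
    magnusT N j (MonoidAlgebra.single g (1 : ℤ) * v) q = magnusT N j v (q * g) := by
  induction v using MonoidAlgebra.induction_linear with
  | zero => rw [mul_zero]; rw [magnusT_zero, magnusT_zero]
  | add f h hf hh => rw [mul_add, magnusT_add, magnusT_add, hf, hh]
  | single a b =>
      rw [MonoidAlgebra.single_mul_single, one_mul, magnusT_single, magnusT_single, mul_assoc]

lemma magnus_main (w : FreeGroup (Fin r)) :
    ∀ q, magnusD N w q = ∑ j : Fin r, magnusT N j ((magnusPsi N w).u j) q := by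
  induction w with
  | C1 =>
      intro q
      simp [magnusD_one, map_one, Magnus.one_u, magnusT_zero]
  | of i =>
      intro q
      rw [magnusPsi_of]
      have hu : ∀ j, ((⟨QuotientGroup.mk (FreeGroup.of i), Pi.single i 1⟩ :
          Magnus r (FreeGroup (Fin r) ⧸ N))).u j =
          (Pi.single i 1 : Fin r → MonoidAlgebra ℤ (FreeGroup (Fin r) ⧸ N)) j := by intro j; rfl
      simp only [hu]
      rw [Finset.sum_eq_single_of_mem i (Finset.mem_univ i)
        (fun j _ hj => by rw [Pi.single_eq_of_ne hj, magnusT_zero])]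
      rw [Pi.single_eq_same, MonoidAlgebra.one_def, magnusT_single, one_smul, mul_one]
  | inv_of i ih =>
      intro q
      rw [magnusD_inv, magnus_mk_out_mul, ih, map_inv]
      simp only [Magnus.inv_u, magnusT_neg, magnusT_shift, magnusPsi_g,
        QuotientGroup.mk_inv, Finset.sum_neg_distrib]
  | mul x y ihx ihy =>
      intro q
      rw [magnusD_mul, magnus_mk_out_mul, ihx, ihy, map_mul]
      simp only [Magnus.mul_u, magnusT_add, magnusT_shift, magnusPsi_g]
      rw [Finset.sum_add_distrib, add_comm]

lemma magnus_ker_le (w : FreeGroup (Fin r)) (hw : magnusPsi N w = 1) : w ∈ ⁅N, N⁆ := by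
  have hg : (QuotientGroup.mk w : FreeGroup (Fin r) ⧸ N) = 1 := by
    rw [← magnusPsi_g N w, hw]; rfl
  have hd : magnusD N w 1 = 0 := by
    rw [magnus_main N w 1, hw]
    simp [Magnus.one_u, magnusT_zero]
  unfold magnusD at hd
  rw [ofMul_eq_zero] at hd
  have hmem := (QuotientGroup.eq_one_iff _).1 hd
  have h2 := Subgroup.mem_map_of_mem N.subtype hmem
  rw [commutator_def, Subgroup.map_commutator, ← MonoidHom.range_eq_map,
    Subgroup.subtype_range] at h2
  have h3 : (QuotientGroup.mk ((1 : FreeGroup (Fin r) ⧸ N).out * w) :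
      FreeGroup (Fin r) ⧸ N) = 1 := by
    rw [QuotientGroup.mk_mul, QuotientGroup.out_eq', hg, one_mul]
  rw [Subgroup.coe_subtype] at h2
  simp only [h3] at h2
  have h4 := (Subgroup.commutator_normal N N).conj_mem _ h2
    ((1 : FreeGroup (Fin r) ⧸ N).out)⁻¹
  have h5 : ((1 : FreeGroup (Fin r) ⧸ N).out)⁻¹ *
      ((1 : FreeGroup (Fin r) ⧸ N).out * w * ((1 : FreeGroup (Fin r) ⧸ N).out)⁻¹) *
      ((1 : FreeGroup (Fin r) ⧸ N).out)⁻¹⁻¹ = w := by group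
  rwa [h5] at h4

end MagnusProof

/-- The Magnus embedding: the map `x_i ↦ ((μ(x_i), u_i), (0,1))` extends to an injective
group homomorphism `φ : F/N' → M(F/N)`, where `N' = [N,N]` and `u_i` is the `i`-th
basis vector of the free `ℤ(F/N)`-module of rank `r`. -/
theorem magnus_embedding_exists (r : ℕ) (N : Subgroup (FreeGroup (Fin r))) [N.Normal] :
    ∃ φ : (FreeGroup (Fin r) ⧸ (⁅N, N⁆ : Subgroup (FreeGroup (Fin r)))) →*
        Magnus r (FreeGroup (Fin r) ⧸ N),
      Function.Injective φ ∧
      ∀ i : Fin r, φ (QuotientGroup.mk (FreeGroup.of i)) =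
        ⟨QuotientGroup.mk (FreeGroup.of i), Pi.single i 1⟩ := by
  refine ⟨QuotientGroup.lift _ (magnusPsi N) (magnus_comm_le_ker N), ?_, ?_⟩
  · intro a b hab
    obtain ⟨x, rfl⟩ := QuotientGroup.mk_surjective a
    obtain ⟨y, rfl⟩ := QuotientGroup.mk_surjective b
    rw [QuotientGroup.lift_mk', QuotientGroup.lift_mk'] at hab
    rw [QuotientGroup.eq]
    exact magnus_ker_le N _ (by rw [map_mul, map_inv, hab, inv_mul_cancel])
  · intro i
    rw [QuotientGroup.lift_mk']
    exact magnusPsi_of N i
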